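/- arXiv:math/0411378 — 2 statements merged into one kernel-verified Lean document; each statement's English description precedes it below -/
import Mathlib

section
/- Let G be a k-regular undirected graph on h vertices whose adjacency matrix A satisfies |λ| ≤ c < k for every eigenvalue λ of a nonconstant eigenvector. Then for any subset S of vertices, any starting vertex x, and any integer r ≥ log(2h/|S|^{1/2})/log(k/c), the number of walks of length r from x that end in S is at least (|S|/(2h))·k^r; equivalently, a uniformly random walk of length r from x lands in S with probability at least |S|/(2h). -/
open Matrix Finset

theorem spec_bound {V : Type*} [Fintype V] [DecidableEq V]
    (A : Matrix V V ℝ) (k c : ℝ) (hsymm : A.IsSymm)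
    (hreg : ∀ i, ∑ j, A i j = k)
    (hc : 0 < c) (hck : c < k)
    (heig : ∀ (v : V → ℝ) (lam : ℝ), (∑ i, v i) = 0 → v ≠ 0 →
      A.mulVec v = lam • v → |lam| ≤ c)
    (r : ℕ) (w : V → ℝ) (hw : (∑ i, w i) = 0) :
    ∑ i, ((A ^ r) *ᵥ w) i ^ 2 ≤ (c ^ r) ^ 2 * ∑ i, w i ^ 2 := by
  have hA : A.IsHermitian := by
    rwa [Matrix.IsHermitian, Matrix.conjTranspose_eq_transpose_of_trivial]
  set B := hA.eigenvectorBasis with hB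
  set μ := hA.eigenvalues with hμ
  have hcol : ∀ j, ∑ i, A i j = k := by
    intro j
    rw [← hreg j]
    exact Finset.sum_congr rfl fun i _ => hsymm.apply i j ▸ rfl
  have hpow : ∀ (m : ℕ) (j : V), (A ^ m) *ᵥ ⇑(B j) = (μ j) ^ m • ⇑(B j) := by
    intro m j
    induction m with
    | zero => simp
    | succ n ih =>
      rw [pow_succ', ← Matrix.mulVec_mulVec, ih, Matrix.mulVec_smul, hA.mulVec_eigenvectorBasis,
        pow_succ', mul_smul]
      rw [smul_comm]
  have claim : ∀ j : V, (∑ i, (B j) i * w i = 0) ∨ |μ j| ≤ c := by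
    intro j
    by_cases hs : (∑ i, (B j) i) = 0
    · right
      refine heig (⇑(B j)) (μ j) hs ?_ (hA.mulVec_eigenvectorBasis j)
      intro h0
      exact B.orthonormal.ne_zero j (by ext i; exact congrFun h0 i)
    · left
      have hVne : Nonempty V := ⟨j⟩
      set t := ∑ i, (B j) i with ht
      have hμk : μ j = k := by
        have h1 : ∑ i, (A *ᵥ ⇑(B j)) i = k * t := by
          simp only [Matrix.mulVec, dotProduct]
          rw [Finset.sum_comm, Finset.mul_sum]
          refine Finset.sum_congr rfl fun l _ => ?_
          rw [← Finset.sum_mul, hcol l]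
        have h2 : ∑ i, (A *ᵥ ⇑(B j)) i = μ j * t := by
          rw [hA.mulVec_eigenvectorBasis]
          simp [Finset.mul_sum, ht, hμ, hB]
        exact mul_right_cancel₀ hs (h2.symm.trans h1)
      set h := (Fintype.card V : ℝ) with hh
      have hcard : (0:ℝ) < h := by rw [hh]; exact_mod_cast Fintype.card_pos
      set w' : V → ℝ := fun i => (B j) i - t / h with hw'
      have hsum' : ∑ i, w' i = 0 := by
        simp only [hw', Finset.sum_sub_distrib, ← ht, Finset.sum_const, Finset.card_univ,
          nsmul_eq_mul, ← hh]
        field_simp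
        ring
      have hones : A *ᵥ (fun _ => (1:ℝ)) = fun _ => k := by
        ext i; simp [Matrix.mulVec, dotProduct, hreg i]
      have hμk' : hA.eigenvalues j = k := hμk
      have heg' : A.mulVec w' = k • w' := by
        have heq : w' = ⇑(B j) - (t/h) • (fun _ => (1:ℝ)) := by
          ext i; simp [hw']
        rw [heq, Matrix.mulVec_sub, Matrix.mulVec_smul, hones, hA.mulVec_eigenvectorBasis, hμk']
        ext i
        simp only [Pi.sub_apply, Pi.smul_apply, smul_eq_mul]
        ring
      have hwz : w' = 0 := by
        by_contra hne
        have := heig w' k hsum' hne heg'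
        have hkpos : 0 < k := hc.trans hck
        rw [abs_of_pos hkpos] at this
        linarith
      have hconst : ∀ i, (B j) i = t / h := by
        intro i
        have := congrFun hwz i
        simpa [hw', sub_eq_zero] using this
      calc ∑ i, (B j) i * w i = ∑ i, (t/h) * w i := by
            refine Finset.sum_congr rfl fun i _ => by rw [hconst i]
        _ = (t/h) * ∑ i, w i := by rw [Finset.mul_sum]
        _ = 0 := by rw [hw, mul_zero]
  set W : EuclideanSpace ℝ V := WithLp.toLp 2 w with hW
  have hrepr : ∀ (u : EuclideanSpace ℝ V) (j : V), B.repr u j = ∑ i, (B j) i * u i := by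
    intro u j
    rw [B.repr_apply_apply]
    simp [PiLp.inner_apply, RCLike.inner_apply]
    exact Finset.sum_congr rfl fun i _ => mul_comm _ _
  have parseval : ∀ u : EuclideanSpace ℝ V, ∑ j, (B.repr u j) ^ 2 = ∑ i, u i ^ 2 := by
    intro u
    have h2 := B.repr.inner_map_map u u
    simp only [PiLp.inner_apply, RCLike.inner_apply, conj_trivial] at h2
    simpa [sq] using h2
  set U : EuclideanSpace ℝ V := WithLp.toLp 2 ((A ^ r) *ᵥ w) with hU
  have hUrepr : ∀ j, B.repr U j = μ j ^ r * B.repr W j := by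
    intro j
    rw [hrepr, hrepr]
    have key : ∀ l, ∑ i, (B j) i * (A ^ r) i l = μ j ^ r * (B j) l := by
      intro l
      have h1 := congrFun (hpow r j) l
      simp only [Matrix.mulVec, dotProduct, Pi.smul_apply, smul_eq_mul] at h1
      rw [← h1]
      refine Finset.sum_congr rfl fun i _ => ?_
      have hsm : (A ^ r) i l = (A ^ r) l i := by
        have h1 : (A ^ r).IsSymm := hsymm.pow r
        exact h1.apply l i
      rw [hsm, mul_comm]
    calc ∑ i, (B j) i * U i = ∑ i, ∑ l, (B j) i * ((A ^ r) i l * w l) := by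
          refine Finset.sum_congr rfl fun i _ => ?_
          simp only [hU, PiLp.toLp_apply, Matrix.mulVec, dotProduct, Finset.mul_sum]
      _ = ∑ l, (∑ i, (B j) i * (A ^ r) i l) * w l := by
          rw [Finset.sum_comm]
          refine Finset.sum_congr rfl fun l _ => ?_
          rw [Finset.sum_mul]
          refine Finset.sum_congr rfl fun i _ => by ring
      _ = ∑ l, (μ j ^ r * (B j) l) * w l := by
          refine Finset.sum_congr rfl fun l _ => by rw [key l]
      _ = μ j ^ r * ∑ l, (B j) l * w l := by
          rw [Finset.mul_sum]; refine Finset.sum_congr rfl fun l _ => by ring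
  calc ∑ i, U i ^ 2 = ∑ j, (B.repr U j) ^ 2 := (parseval U).symm
    _ = ∑ j, (μ j ^ r * B.repr W j) ^ 2 := by
        refine Finset.sum_congr rfl fun j _ => by rw [hUrepr j]
    _ ≤ ∑ j, (c ^ r) ^ 2 * (B.repr W j) ^ 2 := by
        refine Finset.sum_le_sum fun j _ => ?_
        rcases claim j with h0 | hle
        · rw [hrepr, h0]
          simp [mul_nonneg, sq_nonneg]
        · rw [mul_pow]
          have h1 : (μ j ^ r) ^ 2 ≤ (c ^ r) ^ 2 := by
            rw [← pow_mul, ← pow_mul]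
            have h2 : |μ j| ^ (r * 2) ≤ c ^ (r * 2) :=
              pow_le_pow_left₀ (abs_nonneg _) hle _
            calc μ j ^ (r*2) ≤ |μ j ^ (r*2)| := le_abs_self _
              _ = |μ j| ^ (r*2) := abs_pow _ _
              _ ≤ c ^ (r*2) := h2
          exact mul_le_mul_of_nonneg_right h1 (sq_nonneg _)
    _ = (c ^ r) ^ 2 * ∑ j, (B.repr W j) ^ 2 := by rw [Finset.mul_sum]
    _ = (c ^ r) ^ 2 * ∑ i, w i ^ 2 := by rw [parseval W]

/-- Rapid mixing on a `k`-regular graph (Proposition 1 of Jao–Miller–Venkatesan):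
if every eigenvalue attached to a nonconstant (i.e. mean-zero) eigenvector is at most `c < k`
in absolute value, then for any vertex subset `S`, any start vertex `x`, and any walk length
`r ≥ log(2h/√|S|)/log(k/c)`, the number of walks of length `r` from `x` ending in `S`
is at least `(|S|/(2h))·k^r`. -/
theorem stmt_0 {V : Type*} [Fintype V] [DecidableEq V]
    (A : Matrix V V ℝ) (k c : ℝ)
    (hsymm : A.IsSymm)
    (h01 : ∀ i j, A i j = 0 ∨ A i j = 1)
    (hreg : ∀ i, ∑ j, A i j = k)
    (hc : 0 < c) (hck : c < k)
    (heig : ∀ (v : V → ℝ) (lam : ℝ), (∑ i, v i) = 0 → v ≠ 0 →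
      A.mulVec v = lam • v → |lam| ≤ c)
    (S : Finset V) (x : V) (r : ℕ)
    (hr : Real.log (2 * (Fintype.card V : ℝ) / Real.sqrt (S.card : ℝ)) /
        Real.log (k / c) ≤ (r : ℝ)) :
    (S.card : ℝ) / (2 * (Fintype.card V : ℝ)) * k ^ r ≤ ∑ s ∈ S, (A ^ r) s x := by
  rcases S.eq_empty_or_nonempty with hSe | hSne
  · subst hSe; simp
  have hVne : Nonempty V := ⟨x⟩
  set h := (Fintype.card V : ℝ) with hhdef
  have hh : (0:ℝ) < h := by rw [hhdef]; exact_mod_cast Fintype.card_pos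
  have hk : (0:ℝ) < k := hc.trans hck
  have hScard : (0:ℝ) < (S.card : ℝ) := by exact_mod_cast hSne.card_pos
  have hsq : (0:ℝ) < Real.sqrt (S.card : ℝ) := Real.sqrt_pos.2 hScard
  have hsq2 : Real.sqrt (S.card : ℝ) * Real.sqrt (S.card : ℝ) = (S.card : ℝ) :=
    Real.mul_self_sqrt hScard.le
  -- exponent bound: 2h/√|S| ≤ (k/c)^r
  have hkc1 : (1:ℝ) < k / c := (one_lt_div hc).2 hck
  have hlogpos : 0 < Real.log (k / c) := Real.log_pos hkc1
  have hposq : (0:ℝ) < 2 * h / Real.sqrt (S.card : ℝ) := by positivity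
  have hratio : 2 * h / Real.sqrt (S.card : ℝ) ≤ (k / c) ^ r := by
    rw [div_le_iff₀ hlogpos] at hr
    calc 2 * h / Real.sqrt (S.card : ℝ)
        = Real.exp (Real.log (2 * h / Real.sqrt (S.card : ℝ))) := (Real.exp_log hposq).symm
      _ ≤ Real.exp ((r : ℝ) * Real.log (k / c)) := Real.exp_le_exp.2 hr
      _ = (k / c) ^ r := by
          rw [← Real.log_pow, Real.exp_log (pow_pos (by positivity) r)]
  -- key scalar inequality
  have hkey : Real.sqrt (S.card : ℝ) * c ^ r ≤ (S.card : ℝ) * k ^ r / (2 * h) := by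
    have hcr : (0:ℝ) < c ^ r := pow_pos hc r
    rw [div_pow, le_div_iff₀ hcr] at hratio
    -- hratio : 2*h/√S * c^r ≤ k^r
    rw [div_mul_eq_mul_div, div_le_iff₀ hsq] at hratio
    -- 2*h*c^r ≤ k^r * √S
    rw [le_div_iff₀ (by positivity : (0:ℝ) < 2 * h)]
    have h3 := mul_le_mul_of_nonneg_left hratio hsq.le
    calc Real.sqrt (S.card : ℝ) * c ^ r * (2 * h)
        = Real.sqrt (S.card : ℝ) * (2 * h * c ^ r) := by ring
      _ ≤ Real.sqrt (S.card : ℝ) * (k ^ r * Real.sqrt (S.card : ℝ)) := h3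
      _ = k ^ r * (Real.sqrt (S.card : ℝ) * Real.sqrt (S.card : ℝ)) := by ring
      _ = (S.card : ℝ) * k ^ r := by rw [hsq2]; ring
  -- decomposition
  set w : V → ℝ := fun i => (if i = x then (1:ℝ) else 0) - 1 / h with hwdef
  have hwsum : ∑ i, w i = 0 := by
    simp only [hwdef, Finset.sum_sub_distrib, Finset.sum_ite_eq', Finset.mem_univ, if_true,
      Finset.sum_const, Finset.card_univ, nsmul_eq_mul, ← hhdef]
    field_simp
    ring
  have hones : ∀ m : ℕ, (A ^ m) *ᵥ (fun _ => (1:ℝ)) = fun _ => k ^ m := by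
    intro m
    induction m with
    | zero => simp [Matrix.one_mulVec]
    | succ n ih =>
      rw [pow_succ', ← Matrix.mulVec_mulVec, ih]
      ext i
      simp [Matrix.mulVec, dotProduct, ← Finset.sum_mul, hreg i, pow_succ']
  have hdecomp : ∀ s, (A ^ r) s x = k ^ r / h + ((A ^ r) *ᵥ w) s := by
    intro s
    have hex : (A ^ r) *ᵥ (fun i => if i = x then (1:ℝ) else 0)
        = (1 / h) • ((A ^ r) *ᵥ (fun _ => (1:ℝ))) + (A ^ r) *ᵥ w := by
      have hv : (fun i => if i = x then (1:ℝ) else 0)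
          = (1 / h) • (fun _ => (1:ℝ)) + w := by
        ext i
        simp only [Pi.add_apply, Pi.smul_apply, smul_eq_mul, hwdef]
        ring
      rw [hv, Matrix.mulVec_add, Matrix.mulVec_smul]
    have h1 : ((A ^ r) *ᵥ (fun i => if i = x then (1:ℝ) else 0)) s = (A ^ r) s x := by
      simp [Matrix.mulVec, dotProduct, mul_ite]
    rw [← h1, hex, hones r]
    simp [Pi.add_apply]
    ring
  have hsum : ∑ s ∈ S, (A ^ r) s x
      = (S.card : ℝ) * (k ^ r / h) + ∑ s ∈ S, ((A ^ r) *ᵥ w) s := by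
    rw [Finset.sum_congr rfl fun s _ => hdecomp s, Finset.sum_add_distrib,
      Finset.sum_const, nsmul_eq_mul]
  -- bound the error term
  have hw2 : ∑ i, w i ^ 2 ≤ 1 := by
    have : ∑ i, w i ^ 2 = 1 - 1 / h := by
      simp only [hwdef, sub_sq]
      rw [Finset.sum_add_distrib, Finset.sum_sub_distrib]
      simp only [Finset.sum_ite_eq', Finset.mem_univ, if_true, one_pow,
        Finset.sum_const, Finset.card_univ, nsmul_eq_mul, ← hhdef]
      have e1 : ∑ i, (if i = x then (1:ℝ) else 0) ^ 2 = 1 := by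
        simp [ite_pow, Finset.sum_ite_eq']
      have e2 : ∑ i, 2 * (if i = x then (1:ℝ) else 0) * (1/h) = 2 * (1/h) := by
        simp [mul_ite, ite_mul, Finset.sum_ite_eq']
      rw [e1, e2]
      field_simp
      ring
    rw [this]
    have : 0 < 1 / h := by positivity
    linarith
  have hspec := spec_bound A k c hsymm hreg hc hck heig r w hwsum
  have hCS : (∑ s ∈ S, ((A ^ r) *ᵥ w) s) ^ 2 ≤ (S.card : ℝ) * (c ^ r) ^ 2 := by
    have h1 : (∑ s ∈ S, ((A ^ r) *ᵥ w) s) ^ 2 ≤ (S.card : ℝ) * ∑ s ∈ S, ((A ^ r) *ᵥ w) s ^ 2 := by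
      have := sq_sum_le_card_mul_sum_sq (s := S) (f := fun s => ((A ^ r) *ᵥ w) s)
      exact_mod_cast this
    have h2 : ∑ s ∈ S, ((A ^ r) *ᵥ w) s ^ 2 ≤ ∑ s, ((A ^ r) *ᵥ w) s ^ 2 :=
      Finset.sum_le_sum_of_subset_of_nonneg (Finset.subset_univ S)
        (fun i _ _ => sq_nonneg _)
    have h3 : (c ^ r) ^ 2 * (∑ i, w i ^ 2) ≤ (c ^ r) ^ 2 * 1 :=
      mul_le_mul_of_nonneg_left hw2 (sq_nonneg _)
    calc (∑ s ∈ S, ((A ^ r) *ᵥ w) s) ^ 2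
        ≤ (S.card : ℝ) * ∑ s ∈ S, ((A ^ r) *ᵥ w) s ^ 2 := h1
      _ ≤ (S.card : ℝ) * ((c ^ r) ^ 2 * 1) := by
          refine mul_le_mul_of_nonneg_left ?_ hScard.le
          exact h2.trans (hspec.trans h3)
      _ = (S.card : ℝ) * (c ^ r) ^ 2 := by ring
  have herr : -(Real.sqrt (S.card : ℝ) * c ^ r) ≤ ∑ s ∈ S, ((A ^ r) *ᵥ w) s := by
    have hb : (0:ℝ) ≤ Real.sqrt (S.card : ℝ) * c ^ r := by positivity
    nlinarith [hCS, hsq2, abs_nonneg (∑ s ∈ S, ((A ^ r) *ᵥ w) s),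
      neg_abs_le (∑ s ∈ S, ((A ^ r) *ᵥ w) s), sq_abs (∑ s ∈ S, ((A ^ r) *ᵥ w) s)]
  rw [hsum]
  have : (S.card : ℝ) / (2 * h) * k ^ r = (S.card : ℝ) * (k ^ r / h) - (S.card : ℝ) * k ^ r / (2*h) := by
    field_simp
    ring
  rw [this]
  linarith [hkey, herr]
end

section
/- Let A be a k-regular graph's adjacency matrix on h vertices with all nontrivial eigenvalues bounded by c < k in absolute value, and suppose k, k/(k−c), and h/|S| are each bounded by polynomials in log h. Then there is a polynomial P such that a random walk of length P(log h) from any vertex lands in S with probability ≥ |S|/(2h) ≥ 1/(2·poly(log h)); hence among poly(log h) independent such walks, at least one lands in S with probability ≥ 1/2. -/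
open Matrix Finset

set_option maxHeartbeats 1600000
set_option linter.unusedSectionVars false
open scoped RealInnerProductSpace


lemma euclid_normsq {ι : Type} [Fintype ι] (x : EuclideanSpace ℝ ι) :
    ‖x‖ ^ 2 = ∑ i, x i ^ 2 := by
  rw [EuclideanSpace.norm_eq, Real.sq_sqrt (by positivity)]
  simp [sq_abs]

lemma spectral_step {V : Type} [Fintype V] [DecidableEq V] (A : Matrix V V ℝ) (c k : ℝ)
    (hsym : A.IsSymm) (hrow : ∀ i, ∑ j, A i j = k) (hc : 0 ≤ c)
    (heig : ∀ (v : V → ℝ) (lam : ℝ), (∑ i, v i) = 0 → v ≠ 0 → A.mulVec v = lam • v → |lam| ≤ c)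
    (w : V → ℝ) (hw : ∑ i, w i = 0) :
    ∑ i, (A.mulVec w) i ^ 2 ≤ c ^ 2 * ∑ i, w i ^ 2 := by
  classical
  let T : EuclideanSpace ℝ V →ₗ[ℝ] EuclideanSpace ℝ V :=
    { toFun := fun v => WithLp.toLp 2 (A.mulVec v)
      map_add' := fun u v => by ext i; simp [Matrix.mulVec_add]
      map_smul' := fun a v => by ext i; simp [Matrix.mulVec_smul] }
  let sumL : EuclideanSpace ℝ V →ₗ[ℝ] ℝ :=
    { toFun := fun v => ∑ i, v i
      map_add' := fun u v => by simp [Finset.sum_add_distrib]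
      map_smul' := fun a v => by simp [Finset.mul_sum] }
  let W : Submodule ℝ (EuclideanSpace ℝ V) := LinearMap.ker sumL
  have hmem : ∀ v : EuclideanSpace ℝ V, v ∈ W ↔ ∑ i, v i = 0 := fun v => Iff.rfl
  have hinv : ∀ v ∈ W, T v ∈ W := by
    intro v hv
    rw [hmem] at hv ⊢
    have h0 : ∀ i, T v i = ∑ j, A i j * v j := fun i => rfl
    calc ∑ i, T v i = ∑ j, (∑ i, A i j) * v j := by
          simp_rw [h0, Finset.sum_mul]
          rw [Finset.sum_comm]
      _ = ∑ j, k * v j := by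
          refine Finset.sum_congr rfl fun j _ => ?_
          congr 1
          calc ∑ i, A i j = ∑ i, A j i := by simp_rw [hsym.apply]
            _ = k := hrow j
      _ = 0 := by rw [← Finset.mul_sum, hv, mul_zero]
  have hTsym : T.IsSymmetric := by
    intro u v
    simp only [PiLp.inner_apply, RCLike.inner_apply, starRingEnd_apply, star_trivial]
    have h1 : ∀ i, T u i = ∑ j, A i j * u j := fun i => rfl
    have h2 : ∀ i, T v i = ∑ j, A i j * v j := fun i => rfl
    simp_rw [h1, h2, Finset.sum_mul, Finset.mul_sum]
    rw [Finset.sum_comm]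
    refine Finset.sum_congr rfl fun i _ => Finset.sum_congr rfl fun j _ => ?_
    rw [hsym.apply]; ring
  let T' := T.restrict hinv
  have hT'sym : T'.IsSymmetric := by
    intro u v
    have h := hTsym (u : EuclideanSpace ℝ V) (v : EuclideanSpace ℝ V)
    simpa [T', Submodule.coe_inner, LinearMap.restrict_coe_apply] using h
  let n := Module.finrank ℝ W
  have hn : Module.finrank ℝ W = n := rfl
  let b := hT'sym.eigenvectorBasis hn
  let μ := hT'sym.eigenvalues hn
  have hμ : ∀ i, |μ i| ≤ c := by
    intro i
    have hev := hT'sym.apply_eigenvectorBasis hn i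
    have hev' : (T' (b i) : EuclideanSpace ℝ V) = μ i • ((b i : EuclideanSpace ℝ V)) := by
      rw [show hT'sym.eigenvectorBasis hn = b from rfl] at hev
      rw [hev]
      simp [μ]
    rw [LinearMap.restrict_coe_apply] at hev'
    apply heig ((b i : EuclideanSpace ℝ V)) (μ i)
    · exact (hmem _).1 (b i).2
    · have hne : (b i : EuclideanSpace ℝ V) ≠ 0 := by
        simpa [Submodule.coe_eq_zero] using b.toBasis.ne_zero i
      exact fun h0 => hne (by simpa using congrArg (WithLp.toLp 2) h0)
    · exact (congrArg WithLp.ofLp hev').trans (by simp)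
  have hwW : (WithLp.toLp 2 w : EuclideanSpace ℝ V) ∈ W := (hmem _).2 hw
  set wv : W := ⟨WithLp.toLp 2 w, hwW⟩ with hwv
  have key : ‖T' wv‖ ^ 2 ≤ c ^ 2 * ‖wv‖ ^ 2 := by
    have h1 : ‖T' wv‖ ^ 2 = ∑ i, (b.repr (T' wv) i) ^ 2 := by
      rw [← b.repr.norm_map (T' wv)]; exact euclid_normsq _
    have h2 : ‖wv‖ ^ 2 = ∑ i, (b.repr wv i) ^ 2 := by
      rw [← b.repr.norm_map wv]; exact euclid_normsq _
    rw [h1, h2, Finset.mul_sum]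
    apply Finset.sum_le_sum
    intro i _
    have hr := hT'sym.eigenvectorBasis_apply_self_apply hn wv i
    rw [show hT'sym.eigenvectorBasis hn = b from rfl] at hr
    rw [hr]
    have h3 : (μ i) ^ 2 ≤ c ^ 2 := by
      have h4 := abs_le.mp (hμ i)
      exact sq_le_sq' h4.1 h4.2
    calc (μ i * b.repr wv i) ^ 2 = μ i ^ 2 * (b.repr wv i) ^ 2 := by ring
      _ ≤ c ^ 2 * (b.repr wv i) ^ 2 := mul_le_mul_of_nonneg_right h3 (sq_nonneg _)
  have e1 : ‖T' wv‖ ^ 2 = ∑ i, (A.mulVec w) i ^ 2 := by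
    have hco : (T' wv : EuclideanSpace ℝ V) = WithLp.toLp 2 (A.mulVec w) := by
      rw [LinearMap.restrict_coe_apply]; rfl
    rw [show ‖T' wv‖ = ‖(T' wv : EuclideanSpace ℝ V)‖ from rfl, hco]
    exact euclid_normsq (WithLp.toLp 2 (A.mulVec w))
  have e2 : ‖wv‖ ^ 2 = ∑ i, w i ^ 2 := by
    rw [show ‖wv‖ = ‖(wv : EuclideanSpace ℝ V)‖ from rfl]
    exact euclid_normsq (WithLp.toLp 2 w)
  rw [← e1, ← e2]; exact key

section
variable {V : Type} [Fintype V] [DecidableEq V] (A : Matrix V V ℝ) (c k : ℝ)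

lemma sum_mulVec_zero (hsym : A.IsSymm) (hrow : ∀ i, ∑ j, A i j = k)
    (w : V → ℝ) (hw : ∑ i, w i = 0) : ∑ i, (A.mulVec w) i = 0 := by
  have h0 : ∀ i, (A.mulVec w) i = ∑ j, A i j * w j := fun i => rfl
  calc ∑ i, (A.mulVec w) i = ∑ j, (∑ i, A i j) * w j := by
        simp_rw [h0, Finset.sum_mul]; rw [Finset.sum_comm]
    _ = ∑ j, k * w j := by
        refine Finset.sum_congr rfl fun j _ => ?_
        congr 1
        calc ∑ i, A i j = ∑ i, A j i := by simp_rw [hsym.apply]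
          _ = k := hrow j
    _ = 0 := by rw [← Finset.mul_sum, hw, mul_zero]


lemma spectral_iter (hsym : A.IsSymm) (hrow : ∀ i, ∑ j, A i j = k) (hc : 0 ≤ c)
    (heig : ∀ (v : V → ℝ) (lam : ℝ), (∑ i, v i) = 0 → v ≠ 0 → A.mulVec v = lam • v → |lam| ≤ c)
    (r : ℕ) : ∀ w : V → ℝ, ∑ i, w i = 0 →
    ∑ i, ((A ^ r).mulVec w) i ^ 2 ≤ (c ^ 2) ^ r * ∑ i, w i ^ 2 := by
  induction r with
  | zero => intro w hw; simp [Matrix.one_mulVec]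
  | succ r ih =>
    intro w hw
    have hw' : ∑ i, (A.mulVec w) i = 0 := sum_mulVec_zero A k hsym hrow w hw
    have h1 := ih (A.mulVec w) hw'
    have h2 := spectral_step A c k hsym hrow hc heig w hw
    calc ∑ i, ((A ^ (r+1)).mulVec w) i ^ 2
        = ∑ i, ((A ^ r).mulVec (A.mulVec w)) i ^ 2 := by
          rw [Matrix.mulVec_mulVec, ← pow_succ]
      _ ≤ (c ^ 2) ^ r * ∑ i, (A.mulVec w) i ^ 2 := h1
      _ ≤ (c ^ 2) ^ r * (c ^ 2 * ∑ i, w i ^ 2) :=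
          mul_le_mul_of_nonneg_left h2 (by positivity)
      _ = (c ^ 2) ^ (r+1) * ∑ i, w i ^ 2 := by ring

end

/-- Rapid mixing with amplification: for a family of `k`-regular graphs with nontrivial
eigenvalues bounded by `c < k`, if `k`, `k/(k−c)` and `h/|S|` are bounded by fixed
polynomials in `log h`, then there are polynomials `P`, `M` such that a random walk of any
length `≥ P(log h)` lands in `S` with probability at least `|S|/(2h)`, and among
`⌈M(log h)⌉` independent such walks at least one lands in `S` with probability `≥ 1/2`. -/
theorem stmt_13 (Q₁ Q₂ Q₃ : Polynomial ℝ) :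
    ∃ P M : Polynomial ℝ,
      ∀ (V : Type) [Fintype V] [DecidableEq V],
        ∀ (A : Matrix V V ℝ) (k c : ℝ) (S : Finset V) (x : V),
        A.IsSymm →
        (∀ i j, A i j = 0 ∨ A i j = 1) →
        (∀ i, ∑ j, A i j = k) →
        0 < c → c < k →
        (∀ (v : V → ℝ) (lam : ℝ), (∑ i, v i) = 0 → v ≠ 0 →
          A.mulVec v = lam • v → |lam| ≤ c) →
        S.Nonempty →
        k ≤ Q₁.eval (Real.log (Fintype.card V)) →
        k / (k - c) ≤ Q₂.eval (Real.log (Fintype.card V)) →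
        (Fintype.card V : ℝ) / (S.card : ℝ) ≤ Q₃.eval (Real.log (Fintype.card V)) →
        ∀ r : ℕ, P.eval (Real.log (Fintype.card V)) ≤ (r : ℝ) →
          -- a single walk of length `r` lands in `S` with probability ≥ |S|/(2h)
          (S.card : ℝ) / (2 * (Fintype.card V : ℝ)) ≤ (∑ s ∈ S, (A ^ r) s x) / k ^ r
          -- amplification: `⌈M(log h)⌉` independent walks miss `S` with probability ≤ 1/2
          ∧ (1 - (S.card : ℝ) / (2 * (Fintype.card V : ℝ)))
              ^ ⌈M.eval (Real.log (Fintype.card V))⌉₊ ≤ 1 / 2 := by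
  refine ⟨(Polynomial.C (Real.log 2) + Polynomial.X) * Q₂,
          Polynomial.C (2 * Real.log 2) * Q₃, ?_⟩
  intro V _ _ A k c S x hsym h01 hrow hc hck heig hSne hQ1 hQ2 hQ3 r hr
  classical
  set h : ℝ := (Fintype.card V : ℝ) with hh_def
  set L : ℝ := Real.log h with hL_def
  -- basic positivity facts
  have hcard1 : 1 ≤ Fintype.card V := Fintype.card_pos_iff.mpr ⟨x⟩
  have hh1 : (1 : ℝ) ≤ h := by rw [hh_def]; exact_mod_cast hcard1
  have hh0 : (0 : ℝ) < h := lt_of_lt_of_le one_pos hh1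
  have hL0 : 0 ≤ L := Real.log_nonneg hh1
  have hS1 : (1 : ℝ) ≤ (S.card : ℝ) := by exact_mod_cast hSne.card_pos
  have hSh : (S.card : ℝ) ≤ h := by
    rw [hh_def]; exact_mod_cast Finset.card_le_univ S
  have hk0 : 0 < k := lt_trans hc hck
  have hkc : 0 < k - c := sub_pos.mpr hck
  have hQ2pos : 0 < Q₂.eval L := lt_of_lt_of_le (by positivity) hQ2
  have hQ3pos : 0 < Q₃.eval L := lt_of_lt_of_le (by positivity) hQ3
  constructor
  · -- mixing part
    -- the deviation vector
    set e : V → ℝ := fun i => if i = x then 1 else 0 with he_def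
    set w : V → ℝ := fun i => e i - 1 / h with hw_def
    have hesum : ∑ i, e i = 1 := by simp [he_def]
    have hwsum : ∑ i, w i = 0 := by
      simp only [hw_def, Finset.sum_sub_distrib, hesum, Finset.sum_const, Finset.card_univ,
        nsmul_eq_mul]
      field_simp
      simp [hh_def]
    have hwsq : ∑ i, w i ^ 2 ≤ 1 := by
      have hterm : ∀ i, w i ^ 2 = e i - 2 * (1/h) * e i + 1 / h ^ 2 := by
        intro i
        by_cases hi : i = x <;> simp [hw_def, he_def, hi] <;> ring
      simp_rw [hterm]
      rw [Finset.sum_add_distrib, Finset.sum_sub_distrib, hesum, ← Finset.mul_sum, hesum,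
        Finset.sum_const, Finset.card_univ, nsmul_eq_mul]
      have : (Fintype.card V : ℝ) * (1 / h ^ 2) = 1 / h := by
        rw [← hh_def]; field_simp
      rw [this]
      have hd : 0 < 1 / h := one_div_pos.mpr hh0
      linarith
    -- A^r applied to constant vector
    have hone : ∀ m : ℕ, (A ^ m).mulVec (fun _ => (1:ℝ)) = fun _ => k ^ m := by
      intro m
      induction m with
      | zero => simp [Matrix.one_mulVec]
      | succ m ih =>
        rw [pow_succ', ← Matrix.mulVec_mulVec, ih]
        funext i
        have : (A.mulVec fun _ => k ^ m) i = ∑ j, A i j * k ^ m := rfl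
        rw [this, ← Finset.sum_mul, hrow i, pow_succ']
    -- decomposition
    set g : V → ℝ := (A ^ r).mulVec w with hg_def
    have hdecomp : ∀ s, (A ^ r) s x = g s + 1 / h * k ^ r := by
      intro s
      have he2 : e = w + (1/h) • (fun _ => (1:ℝ)) := by
        funext i; simp [hw_def]
      have h1 : ((A ^ r).mulVec e) s = (A ^ r) s x := by
        have : ((A ^ r).mulVec e) s = ∑ j, (A ^ r) s j * e j := rfl
        rw [this]
        simp [he_def, mul_ite]
      rw [← h1, he2, Matrix.mulVec_add, Matrix.mulVec_smul, hone r]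
      simp [hg_def]
    have hsumS : ∑ s ∈ S, (A ^ r) s x = (∑ s ∈ S, g s) + (S.card : ℝ) * (1 / h * k ^ r) := by
      simp_rw [hdecomp]
      rw [Finset.sum_add_distrib, Finset.sum_const, nsmul_eq_mul]
    -- Cauchy–Schwarz bound on the error
    have hgsq : ∑ i, g i ^ 2 ≤ (c ^ 2) ^ r := by
      have := spectral_iter A c k hsym hrow (le_of_lt hc) heig r w hwsum
      calc ∑ i, g i ^ 2 ≤ (c ^ 2) ^ r * ∑ i, w i ^ 2 := this
        _ ≤ (c ^ 2) ^ r * 1 := by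
            apply mul_le_mul_of_nonneg_left hwsq (by positivity)
        _ = (c ^ 2) ^ r := mul_one _
    have herr : |∑ s ∈ S, g s| ≤ Real.sqrt (S.card : ℝ) * c ^ r := by
      have h1 : (∑ s ∈ S, g s) ^ 2 ≤ (S.card : ℝ) * ∑ s ∈ S, g s ^ 2 := by
        exact_mod_cast sq_sum_le_card_mul_sum_sq (s := S) (f := g)
      have h2 : ∑ s ∈ S, g s ^ 2 ≤ ∑ i, g i ^ 2 :=
        Finset.sum_le_sum_of_subset_of_nonneg (Finset.subset_univ S)
          (fun i _ _ => sq_nonneg _)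
      have h3 : (∑ s ∈ S, g s) ^ 2 ≤ (Real.sqrt (S.card : ℝ) * c ^ r) ^ 2 := by
        have : (Real.sqrt (S.card : ℝ) * c ^ r) ^ 2 = (S.card : ℝ) * (c ^ 2) ^ r := by
          rw [mul_pow, Real.sq_sqrt (by positivity), ← pow_mul, ← pow_mul, Nat.mul_comm]
        rw [this]
        calc (∑ s ∈ S, g s) ^ 2 ≤ (S.card : ℝ) * ∑ s ∈ S, g s ^ 2 := h1
          _ ≤ (S.card : ℝ) * ∑ i, g i ^ 2 := by
              apply mul_le_mul_of_nonneg_left h2 (by positivity)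
          _ ≤ (S.card : ℝ) * (c ^ 2) ^ r := by
              apply mul_le_mul_of_nonneg_left hgsq (by positivity)
      calc |∑ s ∈ S, g s| = Real.sqrt ((∑ s ∈ S, g s) ^ 2) := (Real.sqrt_sq_eq_abs _).symm
        _ ≤ Real.sqrt ((Real.sqrt (S.card : ℝ) * c ^ r) ^ 2) := Real.sqrt_le_sqrt h3
        _ = Real.sqrt (S.card : ℝ) * c ^ r := Real.sqrt_sq (by positivity)
    -- the walk-length condition makes the error small
    have hlogkc : 1 / Q₂.eval L ≤ Real.log (k / c) := by
      have h1 : Real.log (c / k) ≤ c / k - 1 := Real.log_le_sub_one_of_pos (by positivity)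
      have h2 : Real.log (k / c) = - Real.log (c / k) := by
        rw [Real.log_div (ne_of_gt hk0) (ne_of_gt hc), Real.log_div (ne_of_gt hc) (ne_of_gt hk0)]
        ring
      have h3 : 1 / Q₂.eval L ≤ (k - c) / k := by
        rw [div_le_div_iff₀ hQ2pos hk0]
        have := (div_le_iff₀ hkc).mp hQ2
        nlinarith
      have h4 : (k - c) / k = 1 - c / k := by field_simp
      rw [h2]
      rw [h4] at h3
      linarith
    have hrpos : (0:ℝ) ≤ (r:ℝ) := Nat.cast_nonneg r
    have hkey : Real.log 2 + L ≤ (r : ℝ) * Real.log (k / c) := by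
      have h1 : (Real.log 2 + L) * Q₂.eval L ≤ (r : ℝ) := by
        simpa using hr
      have h2 : Real.log 2 + L ≤ (r : ℝ) * (1 / Q₂.eval L) := by
        rw [mul_one_div, le_div_iff₀ hQ2pos]
        exact h1
      calc Real.log 2 + L ≤ (r : ℝ) * (1 / Q₂.eval L) := h2
        _ ≤ (r : ℝ) * Real.log (k / c) := mul_le_mul_of_nonneg_left hlogkc hrpos
    have hsqS1 : 1 ≤ Real.sqrt (S.card : ℝ) := Real.one_le_sqrt.mpr hS1
    have hckr : (c / k) ^ r ≤ Real.sqrt (S.card : ℝ) / (2 * h) := by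
      rw [← Real.log_le_log_iff (by positivity) (by positivity)]
      rw [Real.log_pow]
      have h1 : Real.log (c / k) = - Real.log (k / c) := by
        rw [Real.log_div (ne_of_gt hc) (ne_of_gt hk0), Real.log_div (ne_of_gt hk0) (ne_of_gt hc)]
        ring
      rw [h1]
      have h2 : Real.log (Real.sqrt (S.card : ℝ) / (2 * h)) =
          Real.log (Real.sqrt (S.card : ℝ)) - (Real.log 2 + L) := by
        rw [Real.log_div (by positivity) (by positivity), Real.log_mul (by norm_num)
          (ne_of_gt hh0)]
      rw [h2]
      have h3 : 0 ≤ Real.log (Real.sqrt (S.card : ℝ)) := Real.log_nonneg hsqS1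
      nlinarith
    -- assemble
    have herr' : -(Real.sqrt (S.card : ℝ) * c ^ r) ≤ ∑ s ∈ S, g s := neg_le_of_abs_le herr
    have hmain : Real.sqrt (S.card : ℝ) * c ^ r ≤ (S.card : ℝ) * k ^ r / (2 * h) := by
      have h1 : c ^ r = (c / k) ^ r * k ^ r := by
        rw [div_pow]; field_simp
      rw [h1]
      calc Real.sqrt (S.card:ℝ) * ((c / k) ^ r * k ^ r)
          ≤ Real.sqrt (S.card:ℝ) * (Real.sqrt (S.card:ℝ) / (2 * h) * k ^ r) := by
            apply mul_le_mul_of_nonneg_left _ (Real.sqrt_nonneg _)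
            apply mul_le_mul_of_nonneg_right hckr (by positivity)
        _ = Real.sqrt (S.card:ℝ) * Real.sqrt (S.card:ℝ) * k ^ r / (2 * h) := by ring
        _ = (S.card : ℝ) * k ^ r / (2 * h) := by
            rw [Real.mul_self_sqrt (show (0:ℝ) ≤ (S.card:ℝ) by positivity)]
    have h2h0 : (0:ℝ) < 2 * h := by positivity
    have hmain2 : Real.sqrt (S.card : ℝ) * c ^ r * (2 * h) ≤ (S.card : ℝ) * k ^ r := by
      have := mul_le_mul_of_nonneg_right hmain (le_of_lt h2h0)
      calc Real.sqrt (S.card : ℝ) * c ^ r * (2 * h)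
          ≤ (S.card : ℝ) * k ^ r / (2 * h) * (2 * h) := this
        _ = (S.card : ℝ) * k ^ r := by field_simp
    have herr2 : -((S.card : ℝ) * k ^ r) ≤ (∑ s ∈ S, g s) * (2 * h) := by
      have := mul_le_mul_of_nonneg_right herr' (le_of_lt h2h0)
      calc -((S.card : ℝ) * k ^ r) ≤ -(Real.sqrt (S.card : ℝ) * c ^ r * (2 * h)) := by
            linarith
        _ = -(Real.sqrt (S.card : ℝ) * c ^ r) * (2 * h) := by ring
        _ ≤ (∑ s ∈ S, g s) * (2 * h) := this
    have hconst : (S.card : ℝ) * (1 / h * k ^ r) * (2 * h) = 2 * ((S.card : ℝ) * k ^ r) := by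
      field_simp
    rw [div_le_div_iff₀ h2h0 (by positivity), hsumS]
    calc (S.card : ℝ) * k ^ r
        = -((S.card : ℝ) * k ^ r) + 2 * ((S.card : ℝ) * k ^ r) := by ring
      _ ≤ (∑ s ∈ S, g s) * (2 * h) + (S.card : ℝ) * (1 / h * k ^ r) * (2 * h) := by
          linarith [herr2, hconst.ge, hconst.le]
      _ = ((∑ s ∈ S, g s) + (S.card : ℝ) * (1 / h * k ^ r)) * (2 * h) := by ring
  · -- amplification part
    set p : ℝ := (S.card : ℝ) / (2 * h) with hp_def
    have hp0 : 0 < p := by positivity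
    have hp1 : p ≤ 1 / 2 := by
      rw [hp_def, div_le_div_iff₀ (by positivity) (by norm_num)]
      nlinarith
    set n : ℕ := ⌈(Polynomial.C (2 * Real.log 2) * Q₃).eval L⌉₊ with hn_def
    have hnM : (2 * Real.log 2) * Q₃.eval L ≤ (n : ℝ) := by
      rw [hn_def]
      have : (Polynomial.C (2 * Real.log 2) * Q₃).eval L = (2 * Real.log 2) * Q₃.eval L := by
        simp
      rw [← this]
      exact Nat.le_ceil _
    have hlog2 : 0 < Real.log 2 := Real.log_pos (by norm_num)
    have hnp : Real.log 2 ≤ (n : ℝ) * p := by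
      have h1 : Real.log 2 / p ≤ 2 * Real.log 2 * Q₃.eval L := by
        rw [div_le_iff₀ hp0, hp_def]
        have h2 : Q₃.eval L * ((S.card:ℝ) / (2 * h)) ≥ (h / (S.card:ℝ)) * ((S.card:ℝ) / (2*h)) := by
          apply mul_le_mul_of_nonneg_right hQ3 (by positivity)
        have h3 : (h / (S.card:ℝ)) * ((S.card:ℝ) / (2*h)) = 1 / 2 := by
          field_simp
        nlinarith [hlog2]
      have h4 : Real.log 2 / p ≤ (n : ℝ) := le_trans h1 hnM
      rw [div_le_iff₀ hp0] at h4
      nlinarith [hp0]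
    have hexp : 1 - p ≤ Real.exp (-p) := by
      have := Real.add_one_le_exp (-p)
      linarith
    calc (1 - p) ^ n ≤ Real.exp (-p) ^ n := by
          apply pow_le_pow_left₀ (by linarith) hexp
      _ = Real.exp ((n : ℝ) * (-p)) := (Real.exp_nat_mul _ _).symm
      _ ≤ Real.exp (- Real.log 2) := by
          apply Real.exp_le_exp.mpr
          nlinarith
      _ = 1 / 2 := by
          rw [Real.exp_neg, Real.exp_log (by norm_num)]
          norm_num
end
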